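/- Let X be a nonempty compact subset of ℝ^p with diameter d_X = sup_{x₁,x₂ ∈ X} ‖x₁ − x₂‖, let f₀ : ℝ^p → ℝ be convex and differentiable, and let A₁, …, A_K be nonempty subsets of X whose union is X. Suppose there are affine functions with intercepts α₁, …, α_K ∈ ℝ and slopes β₁, …, β_K ∈ ℝ^p, and an ε ≥ 0, such that for every k ∈ {1, …, K} and every x ∈ A_k one has |α_k + ⟨β_k, x⟩ − f₀(x)| ≤ ε and ‖β_k − ∇f₀(x)‖ ≤ ε. Then for every x ∈ X, |max_{k ∈ {1,…,K}} (α_k + ⟨β_k, x⟩) − f₀(x)| ≤ (1 + d_X) ε. -/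

import Mathlib

open scoped RealInnerProductSpace

lemma grad_support_ineq {E : Type*} [NormedAddCommGroup E] [InnerProductSpace ℝ E]
    [CompleteSpace E]
    (f : E → ℝ) (hconv : ConvexOn ℝ Set.univ f) (hdiff : Differentiable ℝ f)
    (x y : E) : f y + ⟪gradient f y, x - y⟫ ≤ f x := by
  set g : ℝ → E := fun t => y + t • (x - y) with hg
  have hgeq : (f ∘ (AffineMap.lineMap y x : ℝ →ᵃ[ℝ] E)) = f ∘ g := by
    ext t; simp [hg, AffineMap.lineMap_apply, add_comm, Function.comp]
  have hgconv : ConvexOn ℝ Set.univ (f ∘ g) := by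
    have := (hconv.comp_affineMap (AffineMap.lineMap y x)).subset
      (Set.subset_univ _) convex_univ
    rwa [hgeq] at this
  have hfd : HasFDerivAt f (InnerProductSpace.toDual ℝ E (gradient f y)) y :=
    hasGradientAt_iff_hasFDerivAt.mp (hdiff y).hasGradientAt
  have hline : HasDerivAt g (x - y) 0 := by
    have := ((hasDerivAt_id (0:ℝ)).smul_const (x - y)).const_add y
    simp only [id, one_smul] at this
    exact this
  have hg0 : g 0 = y := by simp [hg]
  have hcomp : HasDerivAt (f ∘ g) ⟪gradient f y, x - y⟫ 0 := by
    have := (hg0 ▸ hfd).comp_hasDerivAt 0 hline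
    simpa [InnerProductSpace.toDual_apply_apply, hg0] using this
  have hs := hgconv.deriv_le_slope (Set.mem_univ (0:ℝ)) (Set.mem_univ 1) one_pos hcomp.differentiableAt
  have hslope : slope (f ∘ g) 0 1 = f x - f y := by
    simp [slope, hg, Function.comp]
  rw [hcomp.deriv] at hs
  rw [hslope] at hs
  linarith

/-- The deterministic core of Theorem 2: piecewise value- and gradient-accuracy of
locally fitted hyperplanes on a cover of a compact set `X` transfers to a uniform
error bound for the max-of-hyperplanes estimator. -/
theorem cap_uniform_error_bound {p : ℕ}
    (X : Set (EuclideanSpace ℝ (Fin p))) (hXne : X.Nonempty) (hXc : IsCompact X)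
    (f₀ : EuclideanSpace ℝ (Fin p) → ℝ)
    (hconv : ConvexOn ℝ Set.univ f₀) (hdiff : Differentiable ℝ f₀)
    (K : ℕ) (hK : 0 < K)
    (A : Fin K → Set (EuclideanSpace ℝ (Fin p)))
    (hAne : ∀ k, (A k).Nonempty) (hAX : ∀ k, A k ⊆ X)
    (hcover : (⋃ k, A k) = X)
    (α : Fin K → ℝ) (β : Fin K → EuclideanSpace ℝ (Fin p))
    (ε : ℝ) (hε : 0 ≤ ε)
    (hval : ∀ k, ∀ x ∈ A k, |α k + ⟪β k, x⟫ - f₀ x| ≤ ε)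
    (hgrad : ∀ k, ∀ x ∈ A k, ‖β k - gradient f₀ x‖ ≤ ε) :
    ∀ x ∈ X,
      |Finset.univ.sup' ⟨⟨0, hK⟩, Finset.mem_univ _⟩ (fun k => α k + ⟪β k, x⟫) - f₀ x|
        ≤ (1 + Metric.diam X) * ε := by
  intro x hx
  have hd0 : 0 ≤ Metric.diam X := Metric.diam_nonneg
  rw [abs_sub_le_iff]
  constructor
  · -- upper bound: each plane is below f₀ x + (1+diam)ε
    rw [sub_le_iff_le_add]
    refine Finset.sup'_le _ _ fun k _ => ?_
    obtain ⟨y, hy⟩ := hAne k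
    have hdist : ‖x - y‖ ≤ Metric.diam X := by
      rw [← dist_eq_norm]
      exact Metric.dist_le_diam_of_mem hXc.isBounded hx (hAX k hy)
    have h1 : |α k + ⟪β k, y⟫ - f₀ y| ≤ ε := hval k y hy
    have h2 : ‖β k - gradient f₀ y‖ ≤ ε := hgrad k y hy
    have h3 : f₀ y + ⟪gradient f₀ y, x - y⟫ ≤ f₀ x :=
      grad_support_ineq f₀ hconv hdiff x y
    have h4 : |⟪β k - gradient f₀ y, x - y⟫| ≤ ε * Metric.diam X := by
      calc |⟪β k - gradient f₀ y, x - y⟫|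
          ≤ ‖β k - gradient f₀ y‖ * ‖x - y‖ := abs_real_inner_le_norm _ _
        _ ≤ ε * Metric.diam X := by
            exact mul_le_mul h2 hdist (norm_nonneg _) hε
    have hsplit : ⟪β k, x⟫ = ⟪β k, y⟫ + ⟪gradient f₀ y, x - y⟫
        + ⟪β k - gradient f₀ y, x - y⟫ := by
      simp only [inner_sub_left, inner_sub_right]; ring
    have h1' := (abs_le.mp h1).2
    have h4' := (abs_le.mp h4).2
    have : α k + ⟪β k, x⟫ ≤ f₀ x + ε + ε * Metric.diam X := by
      rw [hsplit]; linarith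
    have he : f₀ x + ε + ε * Metric.diam X = (1 + Metric.diam X) * ε + f₀ x := by ring
    linarith
  · -- lower bound: x lies in some A j
    have : x ∈ ⋃ k, A k := hcover ▸ hx
    obtain ⟨j, hj⟩ := Set.mem_iUnion.mp this
    have hle : α j + ⟪β j, x⟫ ≤
        Finset.univ.sup' ⟨⟨0, hK⟩, Finset.mem_univ _⟩ (fun k => α k + ⟪β k, x⟫) :=
      Finset.le_sup' (fun k => α k + ⟪β k, x⟫) (Finset.mem_univ j)
    have h1 := (abs_le.mp (hval j x hj)).1
    have : (1:ℝ) * ε ≤ (1 + Metric.diam X) * ε :=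
      mul_le_mul_of_nonneg_right (by linarith) hε
    linarith
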